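/- arXiv:1810.09675 — 4 statements merged into one kernel-verified Lean document; each statement's English description precedes it below -/
import Mathlib

section
/- Let ω > 0, let (r_i, s_i) ∈ ℝ² × ℝ² and x_j ∈ ℝ² be fixed centers, and let D_i = {(r,s) ∈ ℝ² × ℝ² : |(s−r) − (s_i−r_i)| ≤ 1/√ω} and X_j = {x ∈ ℝ² : |x − x_j| ≤ 1/√ω}. Then for every integer t ≥ 1 there exist m ≤ t(t+1)/2 and functions u_1,…,u_m : ℝ² × ℝ² → ℂ and v_1,…,v_m : ℝ² → ℂ such that for all (r,s) ∈ D_i and all x ∈ X_j, |exp(iω(s−r)·x) − Σ_{k=1}^{m} u_k(r,s) v_k(x)| ≤ e/t!. In particular, to achieve uniform accuracy ε the separation rank needed is polylogarithmic in 1/ε and independent of ω, so the kernel exp(iω(s−r)·x) restricted to D_i × X_j is numerically low-rank. -/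
open Complex
open scoped RealInnerProductSpace

/-- Theorem 1 of the paper (precise form): let `ω > 0`, let `(rᵢ, sᵢ)` and `xⱼ` be fixed
centers, and let `Dᵢ = {(r,s) : |(s−r) − (sᵢ−rᵢ)| ≤ 1/√ω}` and
`Xⱼ = {x : |x − xⱼ| ≤ 1/√ω}`. Then for every integer `t ≥ 1` there exist
`m ≤ t(t+1)/2` and functions `u₁,…,u_m : ℝ²×ℝ² → ℂ`, `v₁,…,v_m : ℝ² → ℂ` such that
for all `(r,s) ∈ Dᵢ` and all `x ∈ Xⱼ`,
`|exp(iω(s−r)·x) − Σ_k u_k(r,s) v_k(x)| ≤ e/t!`. -/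
theorem farfield_kernel_low_rank (ω : ℝ) (hω : 0 < ω)
    (ri si xj : EuclideanSpace ℝ (Fin 2))
    (Di : Set (EuclideanSpace ℝ (Fin 2) × EuclideanSpace ℝ (Fin 2)))
    (Xj : Set (EuclideanSpace ℝ (Fin 2)))
    (hDi : Di = {p | ‖(p.2 - p.1) - (si - ri)‖ ≤ 1 / Real.sqrt ω})
    (hXj : Xj = {x | ‖x - xj‖ ≤ 1 / Real.sqrt ω})
    (t : ℕ) (ht : 1 ≤ t) :
    ∃ m : ℕ, m ≤ t * (t + 1) / 2 ∧
      ∃ (u : Fin m → EuclideanSpace ℝ (Fin 2) × EuclideanSpace ℝ (Fin 2) → ℂ)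
        (v : Fin m → EuclideanSpace ℝ (Fin 2) → ℂ),
        ∀ p ∈ Di, ∀ x ∈ Xj,
          ‖Complex.exp (Complex.I * ω * (⟪p.2 - p.1, x⟫ : ℝ)) -
              ∑ k : Fin m, u k p * v k x‖ ≤
            Real.exp 1 / (Nat.factorial t : ℝ) := by
  classical
  subst hDi hXj
  -- index type
  have hcard : Fintype.card (Σ n : Fin t, Fin (n + 1)) = t * (t + 1) / 2 := by
    rw [Fintype.card_sigma]
    simp only [Fintype.card_fin]
    rw [Fin.sum_univ_eq_sum_range (fun n => n + 1) t]
    have h1 : ∑ i ∈ Finset.range t, (i + 1) = ∑ i ∈ Finset.range (t + 1), i := by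
      rw [Finset.sum_range_succ' (fun i => i) t]; simp
    rw [h1, Finset.sum_range_id]
    congr 1
    simp [Nat.mul_comm]
  set α := (Σ n : Fin t, Fin (n + 1)) with hαdef
  set e : α ≃ Fin (Fintype.card α) := Fintype.equivFin α with he
  -- the separated factors
  set U : α → EuclideanSpace ℝ (Fin 2) × EuclideanSpace ℝ (Fin 2) → ℂ := fun a p =>
    Complex.exp (Complex.I * ω * (⟪p.2 - p.1, xj⟫ : ℝ)) *
      ((Complex.I * ω) ^ (a.1 : ℕ) / ((a.1 : ℕ).factorial : ℂ)) *
      ((a.1 : ℕ).choose (a.2 : ℕ) : ℂ) *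
      (((p.2 - p.1 - (si - ri)) 0 : ℝ) : ℂ) ^ (a.2 : ℕ) *
      (((p.2 - p.1 - (si - ri)) 1 : ℝ) : ℂ) ^ ((a.1 : ℕ) - (a.2 : ℕ)) with hU
  set V : α → EuclideanSpace ℝ (Fin 2) → ℂ := fun a x =>
    Complex.exp (Complex.I * ω * (⟪si - ri, x - xj⟫ : ℝ)) *
      (((x - xj) 0 : ℝ) : ℂ) ^ (a.2 : ℕ) *
      (((x - xj) 1 : ℝ) : ℂ) ^ ((a.1 : ℕ) - (a.2 : ℕ)) with hV
  refine ⟨Fintype.card α, le_of_eq hcard, fun k => U (e.symm k), fun k => V (e.symm k),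
    ?_⟩
  intro p hp x hx
  set d : EuclideanSpace ℝ (Fin 2) := p.2 - p.1 - (si - ri) with hd
  set y : EuclideanSpace ℝ (Fin 2) := x - xj with hy
  -- rewrite sum over Fin m as sum over α
  have hsum0 : ∑ k : Fin (Fintype.card α), U (e.symm k) p * V (e.symm k) x
      = ∑ a : α, U a p * V a x := Fintype.sum_equiv e.symm _ _ (fun k => rfl)
  -- inner product decomposition
  have hinner : (⟪p.2 - p.1, x⟫ : ℝ) = ⟪p.2 - p.1, xj⟫ + ⟪si - ri, y⟫ + ⟪d, y⟫ := by
    simp only [hd, hy, inner_sub_left, inner_sub_right]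
    ring
  set c : ℝ := ⟪d, y⟫ with hc
  set z : ℂ := Complex.I * ω * (c : ℂ) with hz
  -- inner product as sum of coordinates
  have hcoord : (c : ℂ) = ((d 0 : ℝ) : ℂ) * ((y 0 : ℝ) : ℂ) + ((d 1 : ℝ) : ℂ) * ((y 1 : ℝ) : ℂ) := by
    have : c = d 0 * y 0 + d 1 * y 1 := by
      rw [hc]
      simp [PiLp.inner_apply, Fin.sum_univ_two, mul_comm]
    rw [this]; push_cast; ring
  set P : ℂ := Complex.exp (Complex.I * ω * (⟪p.2 - p.1, xj⟫ : ℝ)) *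
      Complex.exp (Complex.I * ω * (⟪si - ri, y⟫ : ℝ)) with hP
  have hker : Complex.exp (Complex.I * ω * (⟪p.2 - p.1, x⟫ : ℝ)) = P * Complex.exp z := by
    rw [hP, hz, ← Complex.exp_add, ← Complex.exp_add, hinner]
    push_cast
    ring_nf
  have hsum : ∑ a : α, U a p * V a x = P * ∑ n ∈ Finset.range t, z ^ n / (n.factorial : ℂ) := by
    rw [← Finset.univ_sigma_univ, Finset.sum_sigma]
    have hn : ∀ n : Fin t, ∑ j : Fin ((n : ℕ) + 1), U ⟨n, j⟩ p * V ⟨n, j⟩ x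
        = P * (z ^ (n : ℕ) / ((n : ℕ).factorial : ℂ)) := by
      intro n
      have hadd : ∑ j : Fin ((n : ℕ) + 1),
          (((d 0 : ℝ) : ℂ) * ((y 0 : ℝ) : ℂ)) ^ (j : ℕ) *
          (((d 1 : ℝ) : ℂ) * ((y 1 : ℝ) : ℂ)) ^ ((n : ℕ) - (j : ℕ)) *
          ((n : ℕ).choose (j : ℕ) : ℂ)
          = (c : ℂ) ^ (n : ℕ) := by
        rw [hcoord, add_pow, ← Fin.sum_univ_eq_sum_range
          (fun j => (((d 0 : ℝ) : ℂ) * ((y 0 : ℝ) : ℂ)) ^ j *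
            (((d 1 : ℝ) : ℂ) * ((y 1 : ℝ) : ℂ)) ^ ((n : ℕ) - j) * ((n : ℕ).choose j : ℂ)) ((n : ℕ) + 1)]
      calc ∑ j : Fin ((n : ℕ) + 1), U ⟨n, j⟩ p * V ⟨n, j⟩ x
          = P * ((Complex.I * ω) ^ (n : ℕ) / ((n : ℕ).factorial : ℂ)) *
            ∑ j : Fin ((n : ℕ) + 1),
              (((d 0 : ℝ) : ℂ) * ((y 0 : ℝ) : ℂ)) ^ (j : ℕ) *
              (((d 1 : ℝ) : ℂ) * ((y 1 : ℝ) : ℂ)) ^ ((n : ℕ) - (j : ℕ)) *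
              ((n : ℕ).choose (j : ℕ) : ℂ) := by
            rw [Finset.mul_sum]
            refine Finset.sum_congr rfl fun j _ => ?_
            simp only [hU, hV, hP, hd, hy]
            ring
        _ = P * (z ^ (n : ℕ) / ((n : ℕ).factorial : ℂ)) := by
            rw [hadd, hz]
            rw [mul_pow]
            ring
    rw [Finset.sum_congr rfl (fun n _ => hn n), ← Finset.mul_sum,
      ← Fin.sum_univ_eq_sum_range (fun n => z ^ n / (n.factorial : ℂ)) t]
  rw [hsum0, hsum, hker, ← mul_sub]
  have hPnorm : ‖P‖ = 1 := by
    rw [hP, ← Complex.exp_add]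
    have : Complex.I * ω * (⟪p.2 - p.1, xj⟫ : ℝ) + Complex.I * ω * (⟪si - ri, y⟫ : ℝ)
        = ((ω * ⟪p.2 - p.1, xj⟫ + ω * ⟪si - ri, y⟫ : ℝ) : ℂ) * Complex.I := by
      push_cast; ring
    rw [this, Complex.norm_exp_ofReal_mul_I]
  rw [norm_mul, hPnorm, one_mul]
  -- bound on ‖z‖
  have hzn : ‖z‖ ≤ 1 := by
    have h1 : ‖z‖ = ω * |c| := by
      rw [hz]
      simp [abs_of_pos hω, Complex.norm_real, mul_comm]
    have h2 : |c| ≤ ‖d‖ * ‖y‖ := abs_real_inner_le_norm d y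
    have hdn : ‖d‖ ≤ 1 / Real.sqrt ω := hp
    have hyn : ‖y‖ ≤ 1 / Real.sqrt ω := hx
    have hsq : Real.sqrt ω > 0 := Real.sqrt_pos.mpr hω
    have : ω * |c| ≤ ω * ((1 / Real.sqrt ω) * (1 / Real.sqrt ω)) := by
      apply mul_le_mul_of_nonneg_left _ hω.le
      calc |c| ≤ ‖d‖ * ‖y‖ := h2
        _ ≤ (1 / Real.sqrt ω) * (1 / Real.sqrt ω) := by
            apply mul_le_mul hdn hyn (norm_nonneg _) (by positivity)
    rw [h1]
    calc ω * |c| ≤ ω * ((1 / Real.sqrt ω) * (1 / Real.sqrt ω)) := this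
      _ = 1 := by
          rw [div_mul_div_comm, one_mul, Real.mul_self_sqrt hω.le]
          field_simp
  have hb := Complex.exp_bound (x := z) (by exact hzn) (Nat.pos_of_ne_zero (by omega) : 0 < t)
  refine hb.trans ?_
  have h1 : ‖z‖ ^ t ≤ 1 := by
    apply pow_le_one₀ (norm_nonneg z)
    exact hzn
  have hft : (0:ℝ) < (t.factorial : ℝ) := by positivity
  have htp : (1:ℝ) ≤ (t : ℝ) := by exact_mod_cast ht
  calc ‖z‖ ^ t * ((t.succ : ℝ) * ((t.factorial : ℝ) * t)⁻¹)
      ≤ 1 * ((t.succ : ℝ) * ((t.factorial : ℝ) * t)⁻¹) := by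
        apply mul_le_mul_of_nonneg_right h1
        positivity
    _ = (t + 1 : ℝ) / ((t.factorial : ℝ) * t) := by
        push_cast; ring
    _ ≤ Real.exp 1 / (t.factorial : ℝ) := by
        rw [div_le_div_iff₀ (by positivity) hft]
        have he2 : (2:ℝ) ≤ Real.exp 1 := by
          have := Real.add_one_le_exp 1
          linarith
        have ht1 : (t + 1 : ℝ) ≤ 2 * t := by linarith
        calc (t + 1 : ℝ) * (t.factorial : ℝ) ≤ 2 * t * (t.factorial : ℝ) := by
              apply mul_le_mul_of_nonneg_right ht1 hft.le
          _ = 2 * ((t.factorial : ℝ) * t) := by ring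
          _ ≤ Real.exp 1 * ((t.factorial : ℝ) * t) := by
              apply mul_le_mul_of_nonneg_right he2
              positivity
end

section
/- Let a, b ∈ ℝ² with |a·b| ≤ 1 and let t ≥ 1 be an integer. Then there exist m ≤ t(t+1)/2 and functions u_1,…,u_m : ℝ² → ℂ and v_1,…,v_m : ℝ² → ℂ (explicitly, scalar multiples of the monomials a ↦ a₁^l a₂^{k−l} and b ↦ b₁^l b₂^{k−l} for 0 ≤ l ≤ k ≤ t−1) such that |exp(i a·b) − Σ_{k=1}^{m} u_k(a) v_k(b)| ≤ e/t! for all such a, b. Hence on any set of pairs (a,b) with |a·b| ≤ 1, the kernel exp(i a·b) admits a separable approximation of rank t(t+1)/2 with uniform error at most e/t!. -/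
open Complex
open scoped RealInnerProductSpace

/-- Core approximation step behind Theorem 1: for every integer `t ≥ 1` there exist
`m ≤ t(t+1)/2` and functions `u₁,…,u_m, v₁,…,v_m : ℝ² → ℂ` such that for all
`a, b ∈ ℝ²` with `|a·b| ≤ 1`,
`|exp(i a·b) − Σ_{k=1}^m u_k(a) v_k(b)| ≤ e/t!`. -/
theorem inner_exp_separable_approx (t : ℕ) (ht : 1 ≤ t) :
    ∃ m : ℕ, m ≤ t * (t + 1) / 2 ∧
      ∃ (u : Fin m → EuclideanSpace ℝ (Fin 2) → ℂ)
        (v : Fin m → EuclideanSpace ℝ (Fin 2) → ℂ),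
        ∀ a b : EuclideanSpace ℝ (Fin 2), |⟪a, b⟫| ≤ 1 →
          ‖Complex.exp (Complex.I * (⟪a, b⟫ : ℝ)) - ∑ k : Fin m, u k a * v k b‖ ≤
            Real.exp 1 / (Nat.factorial t : ℝ) := by
  classical
  set S : Finset ((_ : ℕ) × ℕ) := (Finset.range t).sigma fun k => Finset.range (k + 1)
    with hS
  set U : (_ : ℕ) × ℕ → EuclideanSpace ℝ (Fin 2) → ℂ := fun p a =>
    (Complex.I ^ p.1 / (p.1.factorial : ℂ)) * (p.1.choose p.2 : ℂ) *
      ((a 0 : ℂ) ^ p.2 * (a 1 : ℂ) ^ (p.1 - p.2)) with hU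
  set V : (_ : ℕ) × ℕ → EuclideanSpace ℝ (Fin 2) → ℂ := fun p b =>
    (b 0 : ℂ) ^ p.2 * (b 1 : ℂ) ^ (p.1 - p.2) with hV
  have hcard : S.card = t * (t + 1) / 2 := by
    rw [hS, Finset.card_sigma]
    simp only [Finset.card_range]
    have h2 : ∀ n : ℕ, (∑ k ∈ Finset.range n, (k + 1)) * 2 = n * (n + 1) := by
      intro n
      induction n with
      | zero => simp
      | succ n ih =>
        rw [Finset.sum_range_succ, add_mul, ih]
        ring
    have := h2 t
    omega
  refine ⟨S.card, le_of_eq hcard, ?_⟩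
  let e := S.equivFin
  refine ⟨fun i => U (e.symm i).1, fun i => V (e.symm i).1, ?_⟩
  intro a b hab
  have hsum : ∑ k : Fin S.card, U (e.symm k).1 a * V (e.symm k).1 b
      = ∑ k ∈ Finset.range t,
          (Complex.I * (⟪a, b⟫ : ℝ)) ^ k / (k.factorial : ℂ) := by
    rw [Equiv.sum_comp e.symm (fun p : {x // x ∈ S} => U p.1 a * V p.1 b)]
    rw [Finset.sum_coe_sort S (fun p => U p a * V p b)]
    rw [Finset.sum_sigma]
    have hinner : ((⟪a, b⟫ : ℝ) : ℂ)
        = (a 0 : ℂ) * (b 0 : ℂ) + (a 1 : ℂ) * (b 1 : ℂ) := by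
      have : (⟪a, b⟫ : ℝ) = a 0 * b 0 + a 1 * b 1 := by
        simp [PiLp.inner_apply, Fin.sum_univ_two, RCLike.inner_apply, conj_trivial,
          mul_comm]
      rw [this]; push_cast; ring
    refine Finset.sum_congr rfl fun k hk => ?_
    rw [mul_pow, hinner, add_pow, Finset.mul_sum, Finset.sum_div]
    refine Finset.sum_congr rfl fun l hl => ?_
    simp only [hU, hV]
    rw [mul_pow, mul_pow]
    ring
  rw [hsum]
  have habs : ‖Complex.I * (⟪a, b⟫ : ℝ)‖ ≤ 1 := by
    rw [norm_mul, Complex.norm_I, one_mul, Complex.norm_real, Real.norm_eq_abs]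
    exact hab
  have hb := Complex.exp_bound habs (by omega : 0 < t)
  refine hb.trans ?_
  have h1 : ‖Complex.I * (⟪a, b⟫ : ℝ)‖ ^ t ≤ 1 :=
    pow_le_one₀ (by positivity) habs
  have htpos : (0 : ℝ) < t := by exact_mod_cast ht
  have ht1 : (1 : ℝ) ≤ t := by exact_mod_cast ht
  have hfpos : (0 : ℝ) < t.factorial := by positivity
  have h2 : ((t.succ : ℝ)) * (((t.factorial : ℝ) * (t : ℝ)))⁻¹
      ≤ Real.exp 1 / t.factorial := by
    rw [mul_inv, div_eq_mul_inv]
    have key : (t.succ : ℝ) * (t : ℝ)⁻¹ ≤ Real.exp 1 := by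
      rw [mul_inv_le_iff₀ htpos]
      push_cast
      nlinarith [Real.exp_one_gt_d9]
    calc (t.succ : ℝ) * ((t.factorial : ℝ)⁻¹ * (t : ℝ)⁻¹)
        = ((t.succ : ℝ) * (t : ℝ)⁻¹) * (t.factorial : ℝ)⁻¹ := by ring
      _ ≤ Real.exp 1 * (t.factorial : ℝ)⁻¹ := by gcongr
  calc ‖Complex.I * (⟪a, b⟫ : ℝ)‖ ^ t
        * ((t.succ : ℝ) * (((t.factorial : ℕ) * (t : ℕ) : ℝ))⁻¹)
      ≤ 1 * ((t.succ : ℝ) * (((t.factorial : ℕ) * (t : ℕ) : ℝ))⁻¹) := by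
        gcongr
    _ ≤ Real.exp 1 / t.factorial := by
        rw [one_mul]
        convert h2 using 3
end

section
/- Let P, m, n, t be positive integers. For each pair i, j ∈ {0,…,P−1}, let U_{ij} ∈ ℂ^{m×t} and V_{ij} ∈ ℂ^{n×t}. Define: the block matrix B ∈ ℂ^{mP×nP} whose (i,j)-th m×n block equals U_{ij} V_{ij}^*; the block-diagonal matrix U ∈ ℂ^{mP×P²t} whose i-th diagonal block is U_i = [U_{i0}, U_{i1}, …, U_{i(P−1)}] ∈ ℂ^{m×tP}; the block-diagonal matrix V ∈ ℂ^{nP×P²t} whose j-th diagonal block is V_j = [V_{0j}, V_{1j}, …, V_{(P−1)j}] ∈ ℂ^{n×tP}; and the matrix Σ ∈ ℂ^{P²t×P²t}, partitioned into P×P blocks Σ_{ij} ∈ ℂ^{Pt×Pt}, each Σ_{ij} itself partitioned into P×P blocks of size t×t, where Σ_{ij} is zero everywhere except that its (j,i)-th t×t block is the t×t identity matrix. Then B = U Σ V^* exactly. -/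
open Matrix
/-- The exact butterfly-type factorization underlying SwitchNet: if `B` is the `P×P`
block matrix whose `(i,j)`-th `m×n` block is `U_{ij} V_{ij}^*`, `U` is the block-diagonal
matrix with `i`-th diagonal block `[U_{i0},…,U_{i(P−1)}]`, `V` is the block-diagonal
matrix with `j`-th diagonal block `[V_{0j},…,V_{(P−1)j}]`, and `Σ` is the switch matrix
whose `(i,j)`-th `Pt×Pt` block is zero except for the `t×t` identity in its `(j,i)`-th
`t×t` sub-block, then `B = U Σ V^*` exactly. -/
theorem butterfly_factorization (P m n t : ℕ)
    (hP : 0 < P) (hm : 0 < m) (hn : 0 < n) (ht : 0 < t)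
    (Ublk : Fin P → Fin P → Matrix (Fin m) (Fin t) ℂ)
    (Vblk : Fin P → Fin P → Matrix (Fin n) (Fin t) ℂ)
    (B : Matrix (Fin P × Fin m) (Fin P × Fin n) ℂ)
    (hB : B = Matrix.of fun p q => (Ublk p.1 q.1 * (Vblk p.1 q.1)ᴴ) p.2 q.2)
    (U : Matrix (Fin P × Fin m) (Fin P × Fin P × Fin t) ℂ)
    (hU : U = Matrix.of fun p q => if p.1 = q.1 then Ublk p.1 q.2.1 p.2 q.2.2 else 0)
    (V : Matrix (Fin P × Fin n) (Fin P × Fin P × Fin t) ℂ)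
    (hV : V = Matrix.of fun p q => if p.1 = q.1 then Vblk q.2.1 p.1 p.2 q.2.2 else 0)
    (Sw : Matrix (Fin P × Fin P × Fin t) (Fin P × Fin P × Fin t) ℂ)
    (hSw : Sw = Matrix.of fun p q =>
      if p.2.1 = q.1 ∧ q.2.1 = p.1 ∧ p.2.2 = q.2.2 then 1 else 0) :
    B = U * Sw * Vᴴ := by
  subst hB hU hV hSw
  ext ⟨i, a⟩ ⟨j, b⟩
  simp only [Matrix.mul_apply, Matrix.conjTranspose_apply, Matrix.of_apply,
    Fintype.sum_prod_type]
  simp [ite_and, Finset.sum_ite_eq, Finset.sum_ite_eq', apply_ite, mul_comm]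
end

section
/- Let P, m, n, t be positive integers, let A ∈ ℂ^{mP×nP} be partitioned into P×P blocks A_{ij} ∈ ℂ^{m×n}, and for each i, j let U_{ij} ∈ ℂ^{m×t}, V_{ij} ∈ ℂ^{n×t}. With U, Σ, V the block-diagonal and switch matrices constructed from the U_{ij}, V_{ij} as in the butterfly factorization, the approximation error satisfies ‖A − UΣV^*‖_F² = Σ_{i,j=0}^{P−1} ‖A_{ij} − U_{ij}V_{ij}^*‖_F². Consequently, if ‖A_{ij} − U_{ij}V_{ij}^*‖_F ≤ ε for every i, j, then ‖A − UΣV^*‖_F ≤ Pε. -/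
open Matrix

/-- The Frobenius norm of a complex matrix. -/
noncomputable def frob {α β : Type*} [Fintype α] [Fintype β] (M : Matrix α β ℂ) : ℝ :=
  Real.sqrt (∑ p, ∑ q, ‖M p q‖ ^ 2)

lemma frob_sq {α β : Type*} [Fintype α] [Fintype β] (M : Matrix α β ℂ) :
    frob M ^ 2 = ∑ p, ∑ q, ‖M p q‖ ^ 2 := by
  unfold frob; rw [Real.sq_sqrt]; positivity

lemma frob_nonneg {α β : Type*} [Fintype α] [Fintype β] (M : Matrix α β ℂ) :
    0 ≤ frob M := Real.sqrt_nonneg _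

/-- Blockwise low-rank approximation error for the butterfly factorization: with `U`, `Σ`,
`V` the block-diagonal and switch matrices built from the blocks `U_{ij}, V_{ij}`,
`‖A − UΣV^*‖_F² = Σ_{i,j} ‖A_{ij} − U_{ij}V_{ij}^*‖_F²`; consequently, if every block
error satisfies `‖A_{ij} − U_{ij}V_{ij}^*‖_F ≤ ε`, then `‖A − UΣV^*‖_F ≤ Pε`. -/
theorem butterfly_frobenius_error (P m n t : ℕ)
    (hP : 0 < P) (hm : 0 < m) (hn : 0 < n) (ht : 0 < t)
    (A : Matrix (Fin P × Fin m) (Fin P × Fin n) ℂ)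
    (Ablk : Fin P → Fin P → Matrix (Fin m) (Fin n) ℂ)
    (hA : ∀ (i j : Fin P) (a : Fin m) (b : Fin n), Ablk i j a b = A (i, a) (j, b))
    (Ublk : Fin P → Fin P → Matrix (Fin m) (Fin t) ℂ)
    (Vblk : Fin P → Fin P → Matrix (Fin n) (Fin t) ℂ)
    (U : Matrix (Fin P × Fin m) (Fin P × Fin P × Fin t) ℂ)
    (hU : U = Matrix.of fun p q => if p.1 = q.1 then Ublk p.1 q.2.1 p.2 q.2.2 else 0)
    (V : Matrix (Fin P × Fin n) (Fin P × Fin P × Fin t) ℂ)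
    (hV : V = Matrix.of fun p q => if p.1 = q.1 then Vblk q.2.1 p.1 p.2 q.2.2 else 0)
    (Sw : Matrix (Fin P × Fin P × Fin t) (Fin P × Fin P × Fin t) ℂ)
    (hSw : Sw = Matrix.of fun p q =>
      if p.2.1 = q.1 ∧ q.2.1 = p.1 ∧ p.2.2 = q.2.2 then 1 else 0) :
    frob (A - U * Sw * Vᴴ) ^ 2 =
        ∑ i : Fin P, ∑ j : Fin P, frob (Ablk i j - Ublk i j * (Vblk i j)ᴴ) ^ 2 ∧
      ∀ ε : ℝ, (∀ i j : Fin P, frob (Ablk i j - Ublk i j * (Vblk i j)ᴴ) ≤ ε) →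
        frob (A - U * Sw * Vᴴ) ≤ P * ε := by
  have key : ∀ (i j : Fin P) (a : Fin m) (b : Fin n),
      (U * Sw * Vᴴ) (i, a) (j, b) = (Ublk i j * (Vblk i j)ᴴ) a b := by
    subst hU hV hSw
    intro i j a b
    simp [Matrix.mul_apply, Matrix.conjTranspose_apply, Fintype.sum_prod_type, ite_and,
      Finset.sum_ite_eq, Finset.sum_ite_eq', mul_ite, ite_mul, Finset.mul_sum,
      Finset.sum_mul, apply_ite (starRingEnd ℂ), map_zero]
  have h1 : frob (A - U * Sw * Vᴴ) ^ 2 =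
      ∑ i : Fin P, ∑ j : Fin P, frob (Ablk i j - Ublk i j * (Vblk i j)ᴴ) ^ 2 := by
    rw [frob_sq]
    rw [Fintype.sum_prod_type]
    rw [show (∑ i : Fin P, ∑ a : Fin m, ∑ q : Fin P × Fin n,
        ‖(A - U * Sw * Vᴴ) (i, a) q‖ ^ 2) =
        ∑ i : Fin P, ∑ a : Fin m, ∑ j : Fin P, ∑ b : Fin n,
        ‖(A - U * Sw * Vᴴ) (i, a) (j, b)‖ ^ 2 from by
      simp [Fintype.sum_prod_type]]
    refine Finset.sum_congr rfl fun i _ => ?_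
    rw [Finset.sum_comm]
    refine Finset.sum_congr rfl fun j _ => ?_
    rw [frob_sq]
    refine Finset.sum_congr rfl fun a _ => Finset.sum_congr rfl fun b _ => ?_
    simp [Matrix.sub_apply, hA, key]
  refine ⟨h1, fun ε hε => ?_⟩
  have hε0 : 0 ≤ ε := le_trans (frob_nonneg _) (hε ⟨0, hP⟩ ⟨0, hP⟩)
  have h2 : frob (A - U * Sw * Vᴴ) ^ 2 ≤ (P * ε) ^ 2 := by
    rw [h1]
    calc ∑ i : Fin P, ∑ j : Fin P, frob (Ablk i j - Ublk i j * (Vblk i j)ᴴ) ^ 2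
        ≤ ∑ _i : Fin P, ∑ _j : Fin P, ε ^ 2 := by
          refine Finset.sum_le_sum fun i _ => Finset.sum_le_sum fun j _ => ?_
          exact pow_le_pow_left₀ (frob_nonneg _) (hε i j) 2
      _ = (P * ε) ^ 2 := by
          simp [Finset.sum_const]
          ring
  calc frob (A - U * Sw * Vᴴ) = Real.sqrt (frob (A - U * Sw * Vᴴ) ^ 2) :=
        (Real.sqrt_sq (frob_nonneg _)).symm
    _ ≤ Real.sqrt ((P * ε) ^ 2) := Real.sqrt_le_sqrt h2
    _ = P * ε := Real.sqrt_sq (by positivity)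
end
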